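/- For Boolean values ℓ_1, ℓ_2, ℓ_3 and auxiliary Boolean variables a, b, c, d, setting a = b = c = true satisfies all nine clauses: (ℓ_1 ∨ a ∨ ¬b), (ℓ_2 ∨ ¬a ∨ c), (ℓ_3 ∨ b ∨ ¬c), (a ∨ ¬c ∨ d), (a ∨ ¬c ∨ ¬d), (b ∨ ¬a ∨ d), (b ∨ ¬a ∨ ¬d), (c ∨ ¬b ∨ d), (c ∨ ¬b ∨ ¬d), regardless of the values of ℓ_1, ℓ_2, ℓ_3, d. Moreover, the set of satisfying assignments of any CNF formula f, projected to the variables of f, equals the set of satisfying assignments of f conjoined with these nine clauses (with fresh variables a, b, c, d) projected to the variables of f. -/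

import Mathlib

/-- A literal is a variable together with a polarity (`true` = positive). -/
abbrev Lit (V : Type*) := V × Bool

/-- Evaluation of a literal under an assignment. -/
def evalLit {V : Type*} (σ : V → Bool) (l : Lit V) : Bool :=
  if l.2 then σ l.1 else !σ l.1

/-- An assignment satisfies a CNF formula if every clause contains a true literal. -/
def satCNF {V : Type*} (σ : V → Bool) (f : List (List (Lit V))) : Prop :=
  ∀ c ∈ f, ∃ l ∈ c, evalLit σ l = true

/-- Lift a literal of `f` into the extended variable type `V ⊕ Fin 4`. -/
def liftLit {V : Type*} (l : Lit V) : Lit (V ⊕ Fin 4) := (Sum.inl l.1, l.2)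

/-- The nine clauses of the degree-padding gadget for literals `ℓ₁, ℓ₂, ℓ₃`, with
fresh variables `a, b, c, d` (encoded as `Sum.inr 0, 1, 2, 3`). -/
def padGadget {V : Type*} (l₁ l₂ l₃ : Lit V) : List (List (Lit (V ⊕ Fin 4))) :=
  let a : Lit (V ⊕ Fin 4) := (Sum.inr 0, true)
  let b : Lit (V ⊕ Fin 4) := (Sum.inr 1, true)
  let c : Lit (V ⊕ Fin 4) := (Sum.inr 2, true)
  let d : Lit (V ⊕ Fin 4) := (Sum.inr 3, true)
  let neg : Lit (V ⊕ Fin 4) → Lit (V ⊕ Fin 4) := fun l => (l.1, !l.2)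
  [[liftLit l₁, a, neg b], [liftLit l₂, neg a, c], [liftLit l₃, b, neg c],
   [a, neg c, d], [a, neg c, neg d],
   [b, neg a, d], [b, neg a, neg d],
   [c, neg b, d], [c, neg b, neg d]]

/-- Setting `a = b = c = true` satisfies all nine clauses of the padding gadget
regardless of `ℓ₁, ℓ₂, ℓ₃, d`; moreover, for any CNF formula `f` (over the variables
`V`, so that `a, b, c, d` are fresh) and any literals `ℓ₁, ℓ₂, ℓ₃`, the satisfying
assignments of `f` projected to the variables of `f` coincide with those of `f`
conjoined with the nine gadget clauses, projected to the variables of `f`. -/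
theorem pad_gadget_preserves_solutions {V : Type*}
    (f : List (List (Lit V))) (l₁ l₂ l₃ : Lit V) :
    (∀ τ : (V ⊕ Fin 4) → Bool,
      τ (Sum.inr 0) = true → τ (Sum.inr 1) = true → τ (Sum.inr 2) = true →
        ∀ c ∈ padGadget l₁ l₂ l₃, ∃ l ∈ c, evalLit τ l = true) ∧
    (∀ σ : V → Bool, satCNF σ f ↔
      ∃ τ : (V ⊕ Fin 4) → Bool, (∀ v, τ (Sum.inl v) = σ v) ∧
        satCNF τ ((f.map fun c => c.map liftLit) ++ padGadget l₁ l₂ l₃)) := by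
  constructor
  · intro τ ha hb hc c hcin
    simp only [padGadget, List.mem_cons, List.not_mem_nil, or_false] at hcin
    rcases hcin with h|h|h|h|h|h|h|h|h <;> subst h <;> simp [evalLit, ha, hb, hc]
  · intro σ
    constructor
    · intro hσ
      refine ⟨fun v => match v with | Sum.inl v => σ v | Sum.inr 3 => false | Sum.inr _ => true,
        fun v => rfl, ?_⟩
      intro c hc
      rcases List.mem_append.mp hc with h|h
      · obtain ⟨c', hc', rfl⟩ := List.mem_map.mp h
        obtain ⟨l, hl, he⟩ := hσ c' hc'
        exact ⟨liftLit l, List.mem_map.mpr ⟨l, hl, rfl⟩, by exact he⟩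
      · simp only [padGadget, List.mem_cons, List.not_mem_nil, or_false] at h
        rcases h with h|h|h|h|h|h|h|h|h <;> subst h <;> simp [evalLit]
    · rintro ⟨τ, hτ, hsat⟩
      intro c hc
      obtain ⟨l, hl, he⟩ := hsat (c.map liftLit) (List.mem_append.mpr (Or.inl (List.mem_map.mpr ⟨c, hc, rfl⟩)))
      obtain ⟨l', hl', rfl⟩ := List.mem_map.mp hl
      refine ⟨l', hl', ?_⟩
      simpa [liftLit, evalLit, hτ] using he
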